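/- Let c ∈ (0,√2), set λ = √(2−c²)/2 and ω = √(2+c²)/2, and let θ_m < 0 and t* with ωt* ∈ (π, 2π) satisfy e^{2λt*} = θ_m² + 2λθ_m + 1 and cos(ωt*)/sin(ωt*) = (λθ_m + 1)/(ωθ_m). Then 1 − (c/π)·(√(2−c²) + θ_m) < 7. -/

import Mathlib

set_option maxHeartbeats 1000000
open Real

private lemma sum7 (y : ℝ) : ∑ i ∈ Finset.range 7, y ^ i / (Nat.factorial i) =
    1 + y + y^2/2 + y^3/6 + y^4/24 + y^5/120 + y^6/720 := by
  norm_num [Finset.sum_range_succ, Nat.factorial]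

private lemma exp_eq_pow4 (x : ℝ) : Real.exp x = (Real.exp (x/4))^4 := by
  rw [← Real.exp_nat_mul]
  congr 1
  push_cast
  ring

lemma expLB4 (x B b : ℝ) (hx : 0 ≤ x) (hB0 : 0 ≤ B)
    (hB : B ≤ 1 + x/4 + (x/4)^2/2 + (x/4)^3/6 + (x/4)^4/24 + (x/4)^5/120 + (x/4)^6/720)
    (hb : b ≤ B^4) : b ≤ Real.exp x := by
  have h1 : (0:ℝ) ≤ x/4 := by linarith
  have hsum := Real.sum_le_exp_of_nonneg h1 7
  rw [sum7] at hsum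
  have hBe : B ≤ exp (x/4) := le_trans hB hsum
  rw [exp_eq_pow4 x]
  calc b ≤ B^4 := hb
    _ ≤ (exp (x/4))^4 := pow_le_pow_left₀ hB0 hBe 4

lemma expUB4 (x B b : ℝ) (hx : 0 ≤ x) (hx4 : x ≤ 4)
    (hB : 1 + x/4 + (x/4)^2/2 + (x/4)^3/6 + (x/4)^4/24 + (x/4)^5/120 + (x/4)^6/720 + (x/4)^7/4410 ≤ B)
    (hb : B^4 ≤ b) : Real.exp x ≤ b := by
  have h0 : (0:ℝ) ≤ x/4 := by linarith
  have h1 : |x/4| ≤ 1 := by rw [abs_of_nonneg h0]; linarith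
  have hbd := Real.exp_bound h1 (n := 7) (by norm_num)
  rw [sum7, abs_of_nonneg h0] at hbd
  have h2 := (abs_le.1 hbd).2
  norm_num [Nat.factorial] at h2
  have hBe : exp (x/4) ≤ B := by nlinarith [pow_nonneg h0 7]
  rw [exp_eq_pow4 x]
  calc (exp (x/4))^4 ≤ B^4 := pow_le_pow_left₀ (exp_pos _).le hBe 4
    _ ≤ b := hb

lemma sinLB (t a : ℝ) (h0 : 0 ≤ t) (h1 : t ≤ 1) (h : a ≤ t - t^3/6 - t^4*(5/96)) : a ≤ Real.sin t := by
  have hb := Real.sin_bound (x := t) (by rw [abs_of_nonneg h0]; exact h1)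
  rw [abs_of_nonneg h0] at hb
  have := (abs_le.1 hb).1
  have h5 : t^5 ≤ t^4 := by
    have h6 := mul_le_mul_of_nonneg_left h1 (pow_nonneg h0 4)
    rw [mul_one, ← pow_succ] at h6
    exact h6
  have h7 : 0 ≤ t^4 := pow_nonneg h0 4
  linarith

lemma sinUB (t b : ℝ) (h0 : 0 ≤ t) (h1 : t ≤ 1) (h : t - t^3/6 + t^4*(5/96) ≤ b) : Real.sin t ≤ b := by
  have hb := Real.sin_bound (x := t) (by rw [abs_of_nonneg h0]; exact h1)
  rw [abs_of_nonneg h0] at hb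
  have := (abs_le.1 hb).2
  have h5 : t^5 ≤ t^4 := by
    have h6 := mul_le_mul_of_nonneg_left h1 (pow_nonneg h0 4)
    rw [mul_one, ← pow_succ] at h6
    exact h6
  have h7 : 0 ≤ t^4 := pow_nonneg h0 4
  linarith

lemma cosLB (t a : ℝ) (h0 : 0 ≤ t) (h1 : t ≤ 1) (h : a ≤ 1 - t^2/2 - t^4*(5/96)) : a ≤ Real.cos t := by
  have hb := Real.cos_bound (x := t) (by rw [abs_of_nonneg h0]; exact h1)
  rw [abs_of_nonneg h0] at hb
  have := (abs_le.1 hb).1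
  linarith

lemma cosUB (t b : ℝ) (h0 : 0 ≤ t) (h1 : t ≤ 1) (h : 1 - t^2/2 + t^4*(5/96) ≤ b) : Real.cos t ≤ b := by
  have hb := Real.cos_bound (x := t) (by rw [abs_of_nonneg h0]; exact h1)
  rw [abs_of_nonneg h0] at hb
  have := (abs_le.1 hb).2
  linarith


lemma trigQ (t a b e f a2 b2 e2 f2 sQ cQ : ℝ)
    (h0 : 0 ≤ t) (h1 : t ≤ 1)
    (ha : a ≤ t - t^3/6 - t^4*(5/96)) (hb : t - t^3/6 + t^4*(5/96) ≤ b)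
    (he : e ≤ 1 - t^2/2 - t^4*(5/96)) (hf : 1 - t^2/2 + t^4*(5/96) ≤ f)
    (h0a : 0 ≤ a) (h0e : 0 ≤ e)
    (ha2 : a2 ≤ 2*a*e) (hb2 : 2*b*f ≤ b2) (he2 : e2 ≤ 2*e^2 - 1) (hf2 : 2*f^2 - 1 ≤ f2)
    (h0a2 : 0 ≤ a2) (h0e2 : 0 ≤ e2)
    (hsQ : sQ ≤ 2*a2*e2) (hcQ : 2*f2^2 - 1 ≤ cQ) :
    sQ ≤ Real.sin (4*t) ∧ Real.cos (4*t) ≤ cQ := by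
  have hsa := sinLB t a h0 h1 ha
  have hsb := sinUB t b h0 h1 hb
  have hce := cosLB t e h0 h1 he
  have hcf := cosUB t f h0 h1 hf
  have hsin0 : 0 ≤ Real.sin t := le_trans h0a hsa
  have hcos0 : 0 ≤ Real.cos t := le_trans h0e hce
  have hmul1 : a*e ≤ Real.sin t * Real.cos t := mul_le_mul hsa hce h0e hsin0
  have hmul2 : Real.sin t * Real.cos t ≤ b*f := mul_le_mul hsb hcf hcos0 (le_trans hsin0 hsb)
  have hs2a : a2 ≤ Real.sin (2*t) := by rw [Real.sin_two_mul]; linarith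
  have hs2b : Real.sin (2*t) ≤ b2 := by rw [Real.sin_two_mul]; linarith
  have hsq1 : e^2 ≤ (Real.cos t)^2 := pow_le_pow_left₀ h0e hce 2
  have hsq2 : (Real.cos t)^2 ≤ f^2 := pow_le_pow_left₀ hcos0 hcf 2
  have hc2e : e2 ≤ Real.cos (2*t) := by rw [Real.cos_two_mul]; linarith
  have hc2f : Real.cos (2*t) ≤ f2 := by rw [Real.cos_two_mul]; linarith
  have hsin20 : 0 ≤ Real.sin (2*t) := le_trans h0a2 hs2a
  have hcos20 : 0 ≤ Real.cos (2*t) := le_trans h0e2 hc2e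
  have hmul3 : a2*e2 ≤ Real.sin (2*t) * Real.cos (2*t) := mul_le_mul hs2a hc2e h0e2 hsin20
  have hsq3 : (Real.cos (2*t))^2 ≤ f2^2 := pow_le_pow_left₀ hcos20 hc2f 2
  have h4 : (4:ℝ)*t = 2*(2*t) := by ring
  constructor
  · rw [h4, Real.sin_two_mul]; linarith
  · rw [h4, Real.cos_two_mul]; linarith


lemma expUB8 (x B b : ℝ) (hx : 0 ≤ x) (hx8 : x ≤ 8)
    (hB : 1 + x/8 + (x/8)^2/2 + (x/8)^3/6 + (x/8)^4/24 + (x/8)^5/120 + (x/8)^6/720 + (x/8)^7/4410 ≤ B)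
    (hb : B^8 ≤ b) : Real.exp x ≤ b := by
  have h0 : (0:ℝ) ≤ x/8 := by linarith
  have h1 : |x/8| ≤ 1 := by rw [abs_of_nonneg h0]; linarith
  have hbd := Real.exp_bound h1 (n := 7) (by norm_num)
  rw [sum7, abs_of_nonneg h0] at hbd
  have h2 := (abs_le.1 hbd).2
  norm_num [Nat.factorial] at h2
  have hBe : exp (x/8) ≤ B := by nlinarith [pow_nonneg h0 7]
  have hx8e : exp x = (exp (x/8))^8 := by
    rw [← Real.exp_nat_mul]
    congr 1
    push_cast
    ring
  rw [hx8e]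
  calc (exp (x/8))^8 ≤ B^8 := pow_le_pow_left₀ (exp_pos _).le hBe 8
    _ ≤ b := hb


lemma sin_neg_on (x : ℝ) (h1 : π < x) (h2 : x < 2*π) : Real.sin x < 0 := by
  have : Real.sin (x - 2*π) < 0 :=
    Real.sin_neg_of_neg_of_neg_pi_lt (by linarith) (by linarith)
  rwa [Real.sin_sub_two_pi] at this

lemma hmono {r : ℝ} (hr0 : 0 < r) :
    StrictMonoOn (fun u : ℝ => Real.exp (r*u) * (Real.cos u - r * Real.sin u))
      (Set.Icc π (2*π)) := by
  apply strictMonoOn_of_deriv_pos (convex_Icc _ _)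
  · exact Continuous.continuousOn (by continuity)
  · intro x hx
    rw [interior_Icc] at hx
    have h1 : HasDerivAt (fun u : ℝ => r*u) r x := by
      simpa using (hasDerivAt_id x).const_mul r
    have h2 := h1.exp
    have h3 : HasDerivAt (fun u : ℝ => Real.cos u - r * Real.sin u)
        (-Real.sin x - r * Real.cos x) x := by
      exact (Real.hasDerivAt_cos x).sub ((Real.hasDerivAt_sin x).const_mul r)
    have hd := h2.mul h3
    rw [show deriv (fun u : ℝ => Real.exp (r*u) * (Real.cos u - r * Real.sin u)) x = _ from hd.deriv]
    have hsin := sin_neg_on x hx.1 hx.2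
    have hexp : (0:ℝ) < Real.exp (r*x) := Real.exp_pos _
    have hfac : Real.exp (r * x) * r * (Real.cos x - r * Real.sin x) +
        Real.exp (r * x) * (-Real.sin x - r * Real.cos x)
        = Real.exp (r*x) * ((1 + r^2) * (-Real.sin x)) := by ring
    rw [hfac]
    have : (0:ℝ) < (1 + r^2) * (-Real.sin x) := by nlinarith [sq_nonneg r]
    exact mul_pos hexp this

lemma step {r u : ℝ} (r2 r1 Q qs qc e1 e2 : ℝ)
    (hu1 : π < u) (hu2 : u < 2*π)
    (hr2 : r2 ≤ r) (hr1 : r ≤ r1) (hr2pos : 0 < r2)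
    (hcon : Real.exp (r*u) * (Real.cos u - r * Real.sin u) = 1)
    (hQ0 : 0 < Q) (hQ3 : Q ≤ 3)
    (hqs : 0 ≤ qs) (hsin : qs ≤ Real.sin Q) (hcos : Real.cos Q ≤ qc)
    (hA : 1 ≤ e1 * (r2 * qs - qc)) (hApos : 0 < r2 * qs - qc)
    (he1 : e1 ≤ Real.exp (r2 * (3.141592 + Q)))
    (he2 : Real.exp (r1 * (3.141593 + Q)) ≤ e2) :
    Real.exp (r * u) ≤ e2 := by
  have hpiL : (3.141592:ℝ) < π := Real.pi_gt_d6
  have hpiU : π < 3.141593 := Real.pi_lt_d6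
  have hr0 : 0 < r := lt_of_lt_of_le hr2pos hr2
  have hQpi : Q < π := by linarith [Real.pi_gt_three]
  have he1pos : 0 < e1 := by nlinarith
  have hcU : Real.cos (π + Q) = -Real.cos Q := by
    rw [Real.cos_add]; simp
  have hsU : Real.sin (π + Q) = -Real.sin Q := by
    rw [Real.sin_add]; simp
  have huU : u ≤ π + Q := by
    by_contra hcon2
    push_neg at hcon2
    have hmem1 : π + Q ∈ Set.Icc π (2*π) := ⟨by linarith, by linarith⟩
    have hmem2 : u ∈ Set.Icc π (2*π) := ⟨hu1.le, hu2.le⟩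
    have hlt := hmono hr0 hmem1 hmem2 hcon2
    simp only at hlt
    rw [hcon, hcU, hsU] at hlt
    -- hlt : exp (r*(π+Q)) * (-cos Q - r * -sin Q) < 1
    have hfge : e1 * (r2 * qs - qc) ≤ Real.exp (r*(π+Q)) * (-Real.cos Q - r * -Real.sin Q) := by
      have hexpge : e1 ≤ Real.exp (r*(π+Q)) := by
        refine le_trans he1 (Real.exp_le_exp.2 ?_)
        have : r2 * (3.141592 + Q) ≤ r2 * (π + Q) := by nlinarith
        have h2 : r2 * (π + Q) ≤ r * (π + Q) := by nlinarith
        linarith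
      have hterm : r2 * qs - qc ≤ -Real.cos Q - r * -Real.sin Q := by
        have : r2 * qs ≤ r * Real.sin Q := by nlinarith
        linarith
      have := mul_le_mul hexpge hterm hApos.le (Real.exp_pos _).le
      linarith
    linarith
  have hru : r * u ≤ r1 * (3.141593 + Q) := by nlinarith
  exact le_trans (Real.exp_le_exp.2 hru) he2

example : True := trivial

set_option maxHeartbeats 1000000 in

lemma r_ub (c lam ω r1 c1 : ℝ) (hlamsq : lam^2 = (2-c^2)/4) (hωsq : ω^2 = (2+c^2)/4)
    (hlam0 : 0 < lam) (hω0 : 0 < ω) (hr1 : 0 ≤ r1) (hc : c1 ≤ c) (hc0 : 0 < c1)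
    (hnum : 2 - c1^2 ≤ r1^2*(2+c1^2)) : lam/ω ≤ r1 := by
  have hc2 : c1^2 ≤ c^2 := by nlinarith
  have h1 : lam^2 ≤ (r1*ω)^2 := by
    have h2 : (r1*ω)^2 = r1^2*ω^2 := by ring
    rw [hlamsq, h2, hωsq]
    nlinarith [sq_nonneg r1]
  rw [div_le_iff₀ hω0]
  nlinarith [h1, mul_nonneg hr1 hω0.le]

lemma r_lb (c lam ω r2 c2 : ℝ) (hlamsq : lam^2 = (2-c^2)/4) (hωsq : ω^2 = (2+c^2)/4)
    (hlam0 : 0 < lam) (hω0 : 0 < ω) (hr2 : 0 ≤ r2) (hc : c ≤ c2) (hc0 : 0 < c)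
    (hnum : r2^2*(2+c2^2) ≤ 2 - c2^2) : r2 ≤ lam/ω := by
  have hc2 : c^2 ≤ c2^2 := by nlinarith
  have h1 : (r2*ω)^2 ≤ lam^2 := by
    have h2 : (r2*ω)^2 = r2^2*ω^2 := by ring
    rw [hlamsq, h2, hωsq]
    nlinarith [sq_nonneg r2]
  rw [le_div_iff₀ hω0]
  nlinarith [h1, mul_nonneg hr2 hω0.le, hlam0]

/-- Let `c ∈ (0,√2)`, `λ = √(2−c²)/2`, `ω = √(2+c²)/2`, and let
`θ_m < 0` and `t*` with `ωt* ∈ (π,2π)` satisfy `e^{2λt*} = θ_m² + 2λθ_m + 1` and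
`cos(ωt*)/sin(ωt*) = (λθ_m + 1)/(ωθ_m)`. Then `1 − (c/π)(√(2−c²) + θ_m) < 7`. -/
theorem stmt19 (c : ℝ) (hc : c ∈ Set.Ioo 0 (Real.sqrt 2))
    (lam ω : ℝ) (hlam : lam = Real.sqrt (2 - c ^ 2) / 2)
    (hω : ω = Real.sqrt (2 + c ^ 2) / 2)
    (θm tstar : ℝ) (hθm : θm < 0)
    (ht : ω * tstar ∈ Set.Ioo Real.pi (2 * Real.pi))
    (heq1 : Real.exp (2 * lam * tstar) = θm ^ 2 + 2 * lam * θm + 1)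
    (heq2 : Real.cos (ω * tstar) / Real.sin (ω * tstar) = (lam * θm + 1) / (ω * θm)) :
    1 - (c / Real.pi) * (Real.sqrt (2 - c ^ 2) + θm) < 7 := by
  obtain ⟨hc0, hcs⟩ := hc
  have hπ : (0:ℝ) < π := Real.pi_pos
  have hcsq : c^2 < 2 := by
    have h2 : (Real.sqrt 2)^2 = 2 := Real.sq_sqrt (by norm_num)
    nlinarith [Real.sqrt_nonneg 2]
  have h2c : (0:ℝ) ≤ 2 - c^2 := by linarith
  have h2c' : (0:ℝ) ≤ 2 + c^2 := by positivity
  have hlam0 : 0 < lam := by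
    rw [hlam]
    exact div_pos (Real.sqrt_pos.2 (by linarith)) two_pos
  have hω0 : 0 < ω := by
    rw [hω]
    exact div_pos (Real.sqrt_pos.2 (by positivity)) two_pos
  have hlamsq : lam^2 = (2-c^2)/4 := by
    rw [hlam, div_pow, Real.sq_sqrt h2c]; norm_num
  have hωsq : ω^2 = (2+c^2)/4 := by
    rw [hω, div_pow, Real.sq_sqrt h2c']; norm_num
  have hunit : lam^2 + ω^2 = 1 := by rw [hlamsq, hωsq]; ring
  set u := ω * tstar with hu
  have hu1 : π < u := ht.1
  have hu2 : u < 2*π := ht.2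
  have hsinu : Real.sin u < 0 := by
    have : Real.sin (u - 2*π) < 0 :=
      Real.sin_neg_of_neg_of_neg_pi_lt (by linarith) (by linarith)
    rwa [Real.sin_sub_two_pi] at this
  have hθω : ω*θm < 0 := mul_neg_of_pos_of_neg hω0 hθm
  set E := Real.exp (lam * tstar) with hE
  have hEpos : 0 < E := Real.exp_pos _
  have hE2 : E^2 = θm^2 + 2*lam*θm + 1 := by
    have h2 : 2*lam*tstar = lam*tstar + lam*tstar := by ring
    rw [h2, Real.exp_add] at heq1
    rw [hE, sq]
    exact heq1
  have hcross : Real.cos u * (ω*θm) = Real.sin u * (lam*θm + 1) := by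
    rw [div_eq_div_iff (ne_of_lt hsinu) (ne_of_lt hθω)] at heq2
    linarith
  have hpyth := Real.sin_sq_add_cos_sq u
  have hE2' : E^2 = (lam*θm+1)^2 + (ω*θm)^2 := by
    linear_combination hE2 - θm^2 * hunit
  have hsqeq : (E*Real.sin u - ω*θm) * (E*Real.sin u + ω*θm) = 0 := by
    linear_combination (Real.sin u)^2 * hE2'
      - ((Real.sin u)*(lam*θm+1) + (Real.cos u)*(ω*θm)) * hcross + (ω*θm)^2 * hpyth
  have hkey : ω*θm = E * Real.sin u := by
    rcases mul_eq_zero.1 hsqeq with h | h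
    · linarith
    · have hEneg := mul_neg_of_pos_of_neg hEpos hsinu
      linarith
  have hcosE : lam*θm + 1 = E * Real.cos u := by
    have h1 : Real.sin u * ((lam*θm + 1) - E*Real.cos u) = 0 := by
      linear_combination (-1) * hcross + Real.cos u * hkey
    rcases mul_eq_zero.1 h1 with h | h
    · exact absurd h (ne_of_lt hsinu)
    · linarith
  set r := lam/ω with hrdef
  have hr0 : 0 < r := div_pos hlam0 hω0
  have hru : r * u = lam * tstar := by
    rw [hrdef, hu]; field_simp
  have hEr : E = Real.exp (r*u) := by rw [hru]
  have hcon : Real.exp (r*u) * (Real.cos u - r * Real.sin u) = 1 := by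
    rw [← hEr]
    have hrω : r * ω = lam := by rw [hrdef]; field_simp
    have h5 : E * Real.cos u - r * (E * Real.sin u) = 1 := by
      rw [← hkey, ← hcosE]
      linear_combination (-θm) * hrω
    linarith [h5]
  -- reduction to main bound
  suffices hmain : c * E < 6*π by
    have hθlam : θm + lam = E*(lam*Real.cos u + ω*Real.sin u) := by
      have h1 : lam*(lam*θm+1) + ω*(ω*θm) = lam*(E*Real.cos u) + ω*(E*Real.sin u) := by
        rw [← hcosE, ← hkey]
      linear_combination h1 - θm*hunit
    have hid : (lam*Real.cos u + ω*Real.sin u)^2 + (lam*Real.sin u - ω*Real.cos u)^2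
        = (lam^2+ω^2)*((Real.sin u)^2+(Real.cos u)^2) := by ring
    rw [hunit, hpyth, one_mul] at hid
    have hsq : (lam*Real.cos u + ω*Real.sin u)^2 ≤ 1 := by
      linarith [sq_nonneg (lam*Real.sin u - ω*Real.cos u)]
    have hbound : -(1:ℝ) ≤ lam*Real.cos u + ω*Real.sin u := by
      linarith [sq_nonneg (lam*Real.cos u + ω*Real.sin u + 1)]
    have hθm_ge : -lam - E ≤ θm := by
      have h6 := mul_le_mul_of_nonneg_left hbound hEpos.le
      linarith [h6, hθlam]
    have hs2 : Real.sqrt (2-c^2) = 2*lam := by rw [hlam]; ring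
    rw [hs2]
    have hkey2 : -(6*π) < c*(2*lam+θm) := by
      have h7 : lam - E ≤ 2*lam + θm := by linarith
      have h8 := mul_le_mul_of_nonneg_left h7 hc0.le
      have h9 : c*(lam - E) = c*lam - c*E := by ring
      linarith [mul_pos hc0 hlam0, h8, h9, hmain]
    have h3 : (c/π)*(2*lam+θm) > -6 := by
      rw [div_mul_eq_mul_div, gt_iff_lt, lt_div_iff₀ hπ]
      linarith
    linarith
  -- main bound by interval analysis
  rw [hEr]
  rcases le_or_gt 1.204 c with hbig | hnext0
  · have hrub : r ≤ 0.4 := by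
      rw [hrdef]
      exact r_ub c lam ω 0.4 1.204 hlamsq hωsq hlam0 hω0 (by norm_num) hbig (by norm_num) (by norm_num)
    have hsqrt2 : Real.sqrt 2 ≤ 1.41422 := by
      have h := Real.sqrt_le_sqrt (show (2:ℝ) ≤ 1.41422^2 by norm_num)
      rwa [Real.sqrt_sq (by norm_num : (0:ℝ) ≤ 1.41422)] at h
    have hcle : c ≤ 1.41422 := le_trans hcs.le hsqrt2
    have hupos : 0 < u := lt_trans hπ hu1
    have h2pi : u ≤ 6.283186 := by linarith only [hu2, Real.pi_lt_d6]
    have hru1 : r*u ≤ 0.4*u := mul_le_mul_of_nonneg_right hrub hupos.le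
    have hexp : Real.exp (r*u) ≤ 12.3453 := by
      refine le_trans (Real.exp_le_exp.2 (show r*u ≤ 2.5132744 by linarith only [hru1, h2pi, hrub])) ?_
      exact expUB4 2.5132744 1.874456666 12.3453 (by norm_num) (by norm_num) (by norm_num) (by norm_num)
    have hfin : c*Real.exp (r*u) ≤ 1.41422*12.3453 := mul_le_mul hcle hexp (Real.exp_pos _).le (by norm_num)
    have h18 : (1.41422:ℝ)*12.3453 ≤ 18.8495 := by norm_num
    linarith only [hfin, h18, Real.pi_gt_d6]
  rcases le_or_gt 0.954 c with hin | hnext1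
  · have hcU : c ≤ 1.204 := hnext0.le
    have hrub : r ≤ 0.611977 := by
      rw [hrdef]
      exact r_ub c lam ω 0.611977 0.954 hlamsq hωsq hlam0 hω0 (by norm_num) hin (by norm_num) (by norm_num)
    have hrlb : 0.399436 ≤ r := by
      rw [hrdef]
      exact r_lb c lam ω 0.399436 1.204 hlamsq hωsq hlam0 hω0 (by norm_num) hcU hc0 (by norm_num)
    have htrig := trigQ 0.338 0.330884479 0.332244031 0.942198224 0.943557776 0.623517536 0.626982878 0.775474986 0.780602554 0.967044505 0.218680695 (by norm_num) (by norm_num) (by norm_num) (by norm_num) (by norm_num) (by norm_num) (by norm_num) (by norm_num) (by norm_num) (by norm_num) (by norm_num) (by norm_num) (by norm_num) (by norm_num) (by norm_num) (by norm_num)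
    have hQT : (4:ℝ)*0.338 = 1.352 := by norm_num
    rw [hQT] at htrig
    have he1 : (6.018875:ℝ) ≤ Real.exp ((0.399436:ℝ)*(3.141592+1.352)) := by
      have hx : ((0.399436:ℝ)*(3.141592+1.352)) = 1.794902414112 := by norm_num
      rw [hx]
      exact expLB4 1.794902414112 1.566314037 6.018875 (by norm_num) (by norm_num) (by norm_num) (by norm_num)
    have he2 : Real.exp ((0.611977:ℝ)*(3.141593+1.352)) ≤ (15.642273:ℝ) := by
      have hx : ((0.611977:ℝ)*(3.141593+1.352)) = 2.749975563361 := by norm_num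
      rw [hx]
      exact expUB4 2.749975563361 1.988726039 15.642273 (by norm_num) (by norm_num) (by norm_num) (by norm_num)
    have hstep := step 0.399436 0.611977 1.352 0.967044505 0.218680695 6.018875 15.642273 hu1 hu2 hrlb hrub (by norm_num) hcon (by norm_num) (by norm_num) (by norm_num) htrig.1 htrig.2 (by norm_num) (by norm_num) he1 he2
    have hfin : c*Real.exp (r*u) ≤ 1.204*15.642273 := mul_le_mul hcU hstep (Real.exp_pos _).le (by norm_num)
    have h18 : (1.204:ℝ)*15.642273 ≤ 18.8495 := by norm_num
    linarith only [hfin, h18, Real.pi_gt_d6]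
  rcases le_or_gt 0.821 c with hin | hnext2
  · have hcU : c ≤ 0.954 := hnext1.le
    have hrub : r ≤ 0.704176 := by
      rw [hrdef]
      exact r_ub c lam ω 0.704176 0.821 hlamsq hωsq hlam0 hω0 (by norm_num) hin (by norm_num) (by norm_num)
    have hrlb : 0.611976 ≤ r := by
      rw [hrdef]
      exact r_lb c lam ω 0.611976 0.954 hlamsq hωsq hlam0 hω0 (by norm_num) hcU hc0 (by norm_num)
    have htrig := trigQ 0.273 0.269319629 0.269898232 0.962446199 0.963024801 0.518411306 0.519837383 0.852605371 0.854833535 0.884000527 0.461480746 (by norm_num) (by norm_num) (by norm_num) (by norm_num) (by norm_num) (by norm_num) (by norm_num) (by norm_num) (by norm_num) (by norm_num) (by norm_num) (by norm_num) (by norm_num) (by norm_num) (by norm_num) (by norm_num)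
    have hQT : (4:ℝ)*0.273 = 1.092 := by norm_num
    rw [hQT] at htrig
    have he1 : (13.340907:ℝ) ≤ Real.exp ((0.611976:ℝ)*(3.141592+1.092)) := by
      have hx : ((0.611976:ℝ)*(3.141592+1.092)) = 2.590856697792 := by norm_num
      rw [hx]
      exact expLB4 2.590856697792 1.91115692 13.340907 (by norm_num) (by norm_num) (by norm_num) (by norm_num)
    have he2 : Real.exp ((0.704176:ℝ)*(3.141593+1.092)) ≤ (19.711389:ℝ) := by
      have hx : ((0.704176:ℝ)*(3.141593+1.092)) = 2.981194584368 := by norm_num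
      rw [hx]
      exact expUB4 2.981194584368 2.107071658 19.711389 (by norm_num) (by norm_num) (by norm_num) (by norm_num)
    have hstep := step 0.611976 0.704176 1.092 0.884000527 0.461480746 13.340907 19.711389 hu1 hu2 hrlb hrub (by norm_num) hcon (by norm_num) (by norm_num) (by norm_num) htrig.1 htrig.2 (by norm_num) (by norm_num) he1 he2
    have hfin : c*Real.exp (r*u) ≤ 0.954*19.711389 := mul_le_mul hcU hstep (Real.exp_pos _).le (by norm_num)
    have h18 : (0.954:ℝ)*19.711389 ≤ 18.8495 := by norm_num
    linarith only [hfin, h18, Real.pi_gt_d6]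
  rcases le_or_gt 0.739 c with hin | hnext3
  · have hcU : c ≤ 0.821 := hnext2.le
    have hrub : r ≤ 0.755657 := by
      rw [hrdef]
      exact r_ub c lam ω 0.755657 0.739 hlamsq hωsq hlam0 hω0 (by norm_num) hin (by norm_num) (by norm_num)
    have hrlb : 0.704175 ≤ r := by
      rw [hrdef]
      exact r_lb c lam ω 0.704175 0.821 hlamsq hωsq hlam0 hω0 (by norm_num) hcU hc0 (by norm_num)
    have htrig := trigQ 0.251 0.248157732 0.248571184 0.968292774 0.968706226 0.480578677 0.481584908 0.875181792 0.876783505 0.841187415 0.53749863 (by norm_num) (by norm_num) (by norm_num) (by norm_num) (by norm_num) (by norm_num) (by norm_num) (by norm_num) (by norm_num) (by norm_num) (by norm_num) (by norm_num) (by norm_num) (by norm_num) (by norm_num) (by norm_num)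
    have hQT : (4:ℝ)*0.251 = 1.004 := by norm_num
    rw [hQT] at htrig
    have he1 : (18.526013:ℝ) ≤ Real.exp ((0.704175:ℝ)*(3.141592+1.004)) := by
      have hx : ((0.704175:ℝ)*(3.141592+1.004)) = 2.9192222466 := by norm_num
      rw [hx]
      exact expLB4 2.9192222466 2.074653122 18.526013 (by norm_num) (by norm_num) (by norm_num) (by norm_num)
    have he2 : Real.exp ((0.755657:ℝ)*(3.141593+1.004)) ≤ (22.934647:ℝ) := by
      have hx : ((0.755657:ℝ)*(3.141593+1.004)) = 3.132646369601 := by norm_num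
      rw [hx]
      exact expUB4 3.132646369601 2.188381387 22.934647 (by norm_num) (by norm_num) (by norm_num) (by norm_num)
    have hstep := step 0.704175 0.755657 1.004 0.841187415 0.53749863 18.526013 22.934647 hu1 hu2 hrlb hrub (by norm_num) hcon (by norm_num) (by norm_num) (by norm_num) htrig.1 htrig.2 (by norm_num) (by norm_num) he1 he2
    have hfin : c*Real.exp (r*u) ≤ 0.821*22.934647 := mul_le_mul hcU hstep (Real.exp_pos _).le (by norm_num)
    have h18 : (0.821:ℝ)*22.934647 ≤ 18.8495 := by norm_num
    linarith only [hfin, h18, Real.pi_gt_d6]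
  rcases le_or_gt 0.683 c with hin | hnext4
  · have hcU : c ≤ 0.739 := hnext3.le
    have hrub : r ≤ 0.788504 := by
      rw [hrdef]
      exact r_ub c lam ω 0.788504 0.683 hlamsq hωsq hlam0 hω0 (by norm_num) hin (by norm_num) (by norm_num)
    have hrlb : 0.755656 ≤ r := by
      rw [hrdef]
      exact r_lb c lam ω 0.755656 0.739 hlamsq hωsq hlam0 hω0 (by norm_num) hcU hc0 (by norm_num)
    have htrig := trigQ 0.241 0.238491381 0.238842778 0.970783801 0.971135199 0.463047138 0.463897258 0.884842376 0.88620715 0.819447459 0.570726226 (by norm_num) (by norm_num) (by norm_num) (by norm_num) (by norm_num) (by norm_num) (by norm_num) (by norm_num) (by norm_num) (by norm_num) (by norm_num) (by norm_num) (by norm_num) (by norm_num) (by norm_num) (by norm_num)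
    have hQT : (4:ℝ)*0.241 = 0.964 := by norm_num
    rw [hQT] at htrig
    have he1 : (22.25011:ℝ) ≤ Real.exp ((0.755656:ℝ)*(3.141592+0.964)) := by
      have hx : ((0.755656:ℝ)*(3.141592+0.964)) = 3.102415228352 := by norm_num
      rw [hx]
      exact expLB4 3.102415228352 2.17186609 22.25011 (by norm_num) (by norm_num) (by norm_num) (by norm_num)
    have he2 : Real.exp ((0.788504:ℝ)*(3.141593+0.964)) ≤ (25.464341:ℝ) := by
      have hx : ((0.788504:ℝ)*(3.141593+0.964)) = 3.237276502872 := by norm_num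
      rw [hx]
      exact expUB4 3.237276502872 2.2463794 25.464341 (by norm_num) (by norm_num) (by norm_num) (by norm_num)
    have hstep := step 0.755656 0.788504 0.964 0.819447459 0.570726226 22.25011 25.464341 hu1 hu2 hrlb hrub (by norm_num) hcon (by norm_num) (by norm_num) (by norm_num) htrig.1 htrig.2 (by norm_num) (by norm_num) he1 he2
    have hfin : c*Real.exp (r*u) ≤ 0.739*25.464341 := mul_le_mul hcU hstep (Real.exp_pos _).le (by norm_num)
    have h18 : (0.739:ℝ)*25.464341 ≤ 18.8495 := by norm_num
    linarith only [hfin, h18, Real.pi_gt_d6]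
  rcases le_or_gt 0.64 c with hin | hnext5
  · have hcU : c ≤ 0.683 := hnext4.le
    have hrub : r ≤ 0.812421 := by
      rw [hrdef]
      exact r_ub c lam ω 0.812421 0.64 hlamsq hωsq hlam0 hω0 (by norm_num) hin (by norm_num) (by norm_num)
    have hrlb : 0.788503 ≤ r := by
      rw [hrdef]
      exact r_lb c lam ω 0.788503 0.683 hlamsq hωsq hlam0 hω0 (by norm_num) hcU hc0 (by norm_num)
    have htrig := trigQ 0.235 0.232678177 0.232995865 0.972228656 0.972546344 0.452432782 0.453198554 0.890457119 0.891692783 0.805743983 0.590232039 (by norm_num) (by norm_num) (by norm_num) (by norm_num) (by norm_num) (by norm_num) (by norm_num) (by norm_num) (by norm_num) (by norm_num) (by norm_num) (by norm_num) (by norm_num) (by norm_num) (by norm_num) (by norm_num)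
    have hQT : (4:ℝ)*0.235 = 0.94 := by norm_num
    rw [hQT] at htrig
    have he1 : (24.984646:ℝ) ≤ Real.exp ((0.788503:ℝ)*(3.141592+0.94)) := by
      have hx : ((0.788503:ℝ)*(3.141592+0.94)) = 3.218347536776 := by norm_num
      rw [hx]
      exact expLB4 3.218347536776 2.235724586 24.984646 (by norm_num) (by norm_num) (by norm_num) (by norm_num)
    have he2 : Real.exp ((0.812421:ℝ)*(3.141593+0.94)) ≤ (27.54923:ℝ) := by
      have hx : ((0.812421:ℝ)*(3.141593+0.94)) = 3.315971866653 := by norm_num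
      rw [hx]
      exact expUB4 3.315971866653 2.291011994 27.54923 (by norm_num) (by norm_num) (by norm_num) (by norm_num)
    have hstep := step 0.788503 0.812421 0.94 0.805743983 0.590232039 24.984646 27.54923 hu1 hu2 hrlb hrub (by norm_num) hcon (by norm_num) (by norm_num) (by norm_num) htrig.1 htrig.2 (by norm_num) (by norm_num) he1 he2
    have hfin : c*Real.exp (r*u) ≤ 0.683*27.54923 := mul_le_mul hcU hstep (Real.exp_pos _).le (by norm_num)
    have h18 : (0.683:ℝ)*27.54923 ≤ 18.8495 := by norm_num
    linarith only [hfin, h18, Real.pi_gt_d6]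
  rcases le_or_gt 0.602 c with hin | hnext6
  · have hcU : c ≤ 0.64 := hnext5.le
    have hrub : r ≤ 0.832581 := by
      rw [hrdef]
      exact r_ub c lam ω 0.832581 0.602 hlamsq hωsq hlam0 hω0 (by norm_num) hin (by norm_num) (by norm_num)
    have hrlb : 0.81242 ≤ r := by
      rw [hrdef]
      exact r_lb c lam ω 0.81242 0.64 hlamsq hωsq hlam0 hω0 (by norm_num) hcU hc0 (by norm_num)
    have htrig := trigQ 0.23 0.227826416 0.228117918 0.973404249 0.973695751 0.443534402 0.444234895 0.895031663 0.896166832 0.793954666 0.606229982 (by norm_num) (by norm_num) (by norm_num) (by norm_num) (by norm_num) (by norm_num) (by norm_num) (by norm_num) (by norm_num) (by norm_num) (by norm_num) (by norm_num) (by norm_num) (by norm_num) (by norm_num) (by norm_num)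
    have hQT : (4:ℝ)*0.23 = 0.92 := by norm_num
    rw [hQT] at htrig
    have he1 : (27.10228:ℝ) ≤ Real.exp ((0.81242:ℝ)*(3.141592+0.92)) := by
      have hx : ((0.81242:ℝ)*(3.141592+0.92)) = 3.29971857264 := by norm_num
      rw [hx]
      exact expLB4 3.29971857264 2.281662794 27.10228 (by norm_num) (by norm_num) (by norm_num) (by norm_num)
    have he2 : Real.exp ((0.832581:ℝ)*(3.141593+0.92)) ≤ (29.418036:ℝ) := by
      have hx : ((0.832581:ℝ)*(3.141593+0.92)) = 3.381605161533 := by norm_num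
      rw [hx]
      exact expUB4 3.381605161533 2.328913811 29.418036 (by norm_num) (by norm_num) (by norm_num) (by norm_num)
    have hstep := step 0.81242 0.832581 0.92 0.793954666 0.606229982 27.10228 29.418036 hu1 hu2 hrlb hrub (by norm_num) hcon (by norm_num) (by norm_num) (by norm_num) htrig.1 htrig.2 (by norm_num) (by norm_num) he1 he2
    have hfin : c*Real.exp (r*u) ≤ 0.64*29.418036 := mul_le_mul hcU hstep (Real.exp_pos _).le (by norm_num)
    have h18 : (0.64:ℝ)*29.418036 ≤ 18.8495 := by norm_num
    linarith only [hfin, h18, Real.pi_gt_d6]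
  rcases le_or_gt 0.567 c with hin | hnext7
  · have hcU : c ≤ 0.602 := hnext6.le
    have hrub : r ≤ 0.850313 := by
      rw [hrdef]
      exact r_ub c lam ω 0.850313 0.567 hlamsq hωsq hlam0 hω0 (by norm_num) hin (by norm_num) (by norm_num)
    have hrlb : 0.83258 ≤ r := by
      rw [hrdef]
      exact r_lb c lam ω 0.83258 0.602 hlamsq hωsq hlam0 hω0 (by norm_num) hcU hc0 (by norm_num)
    have htrig := trigQ 0.227 0.224912192 0.22518878 0.974097206 0.974373794 0.438172675 0.438836092 0.897730733 0.898808581 0.786722153 0.615713731 (by norm_num) (by norm_num) (by norm_num) (by norm_num) (by norm_num) (by norm_num) (by norm_num) (by norm_num) (by norm_num) (by norm_num) (by norm_num) (by norm_num) (by norm_num) (by norm_num) (by norm_num) (by norm_num)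
    have hQT : (4:ℝ)*0.227 = 0.908 := by norm_num
    rw [hQT] at htrig
    have he1 : (29.122003:ℝ) ≤ Real.exp ((0.83258:ℝ)*(3.141592+0.908)) := by
      have hx : ((0.83258:ℝ)*(3.141592+0.908)) = 3.37160930736 := by norm_num
      rw [hx]
      exact expLB4 3.37160930736 2.32303265 29.122003 (by norm_num) (by norm_num) (by norm_num) (by norm_num)
    have he2 : Real.exp ((0.850313:ℝ)*(3.141593+0.908)) ≤ (31.293938:ℝ) := by
      have hx : ((0.850313:ℝ)*(3.141593+0.908)) = 3.443421572609 := by norm_num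
      rw [hx]
      exact expUB4 3.443421572609 2.365184659 31.293938 (by norm_num) (by norm_num) (by norm_num) (by norm_num)
    have hstep := step 0.83258 0.850313 0.908 0.786722153 0.615713731 29.122003 31.293938 hu1 hu2 hrlb hrub (by norm_num) hcon (by norm_num) (by norm_num) (by norm_num) htrig.1 htrig.2 (by norm_num) (by norm_num) he1 he2
    have hfin : c*Real.exp (r*u) ≤ 0.602*31.293938 := mul_le_mul hcU hstep (Real.exp_pos _).le (by norm_num)
    have h18 : (0.602:ℝ)*31.293938 ≤ 18.8495 := by norm_num
    linarith only [hfin, h18, Real.pi_gt_d6]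
  rcases le_or_gt 0.531 c with hin | hnext8
  · have hcU : c ≤ 0.567 := hnext7.le
    have hrub : r ≤ 0.867686 := by
      rw [hrdef]
      exact r_ub c lam ω 0.867686 0.531 hlamsq hωsq hlam0 hω0 (by norm_num) hin (by norm_num) (by norm_num)
    have hrlb : 0.850312 ≤ r := by
      rw [hrdef]
      exact r_lb c lam ω 0.850312 0.567 hlamsq hωsq hlam0 hω0 (by norm_num) hcU hc0 (by norm_num)
    have htrig := trigQ 0.224 0.221995636 0.22225789 0.974780873 0.975043127 0.432794199 0.433422057 0.9003955 0.9014182 0.779371898 0.625109543 (by norm_num) (by norm_num) (by norm_num) (by norm_num) (by norm_num) (by norm_num) (by norm_num) (by norm_num) (by norm_num) (by norm_num) (by norm_num) (by norm_num) (by norm_num) (by norm_num) (by norm_num) (by norm_num)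
    have hQT : (4:ℝ)*0.224 = 0.896 := by norm_num
    rw [hQT] at htrig
    have he1 : (30.972007:ℝ) ≤ Real.exp ((0.850312:ℝ)*(3.141592+0.896)) := by
      have hx : ((0.850312:ℝ)*(3.141592+0.896)) = 3.433212928704 := by norm_num
      rw [hx]
      exact expLB4 3.433212928704 2.359078206 30.972007 (by norm_num) (by norm_num) (by norm_num) (by norm_num)
    have he2 : Real.exp ((0.867686:ℝ)*(3.141593+0.896)) ≤ (33.227099:ℝ) := by
      have hx : ((0.867686:ℝ)*(3.141593+0.896)) = 3.503362919798 := by norm_num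
      rw [hx]
      exact expUB4 3.503362919798 2.400894652 33.227099 (by norm_num) (by norm_num) (by norm_num) (by norm_num)
    have hstep := step 0.850312 0.867686 0.896 0.779371898 0.625109543 30.972007 33.227099 hu1 hu2 hrlb hrub (by norm_num) hcon (by norm_num) (by norm_num) (by norm_num) htrig.1 htrig.2 (by norm_num) (by norm_num) he1 he2
    have hfin : c*Real.exp (r*u) ≤ 0.567*33.227099 := mul_le_mul hcU hstep (Real.exp_pos _).le (by norm_num)
    have h18 : (0.567:ℝ)*33.227099 ≤ 18.8495 := by norm_num
    linarith only [hfin, h18, Real.pi_gt_d6]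
  rcases le_or_gt 0.49 c with hin | hnext9
  · have hcU : c ≤ 0.531 := hnext8.le
    have hrub : r ≤ 0.886361 := by
      rw [hrdef]
      exact r_ub c lam ω 0.886361 0.49 hlamsq hωsq hlam0 hω0 (by norm_num) hin (by norm_num) (by norm_num)
    have hrlb : 0.867685 ≤ r := by
      rw [hrdef]
      exact r_lb c lam ω 0.867685 0.531 hlamsq hωsq hlam0 hω0 (by norm_num) hcU hc0 (by norm_num)
    have htrig := trigQ 0.221 0.219076781 0.219325266 0.975455258 0.975703742 0.427399195 0.427992966 0.90302592 0.903995585 0.771905102 0.634416036 (by norm_num) (by norm_num) (by norm_num) (by norm_num) (by norm_num) (by norm_num) (by norm_num) (by norm_num) (by norm_num) (by norm_num) (by norm_num) (by norm_num) (by norm_num) (by norm_num) (by norm_num) (by norm_num)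
    have hQT : (4:ℝ)*0.221 = 0.884 := by norm_num
    rw [hQT] at htrig
    have he1 : (32.877941:ℝ) ≤ Real.exp ((0.867685:ℝ)*(3.141592+0.884)) := by
      have hx : ((0.867685:ℝ)*(3.141592+0.884)) = 3.49294579452 := by norm_num
      rw [hx]
      exact expLB4 3.49294579452 2.394562382 32.877941 (by norm_num) (by norm_num) (by norm_num) (by norm_num)
    have he2 : Real.exp ((0.886361:ℝ)*(3.141593+0.884)) ≤ (35.450291:ℝ) := by
      have hx : ((0.886361:ℝ)*(3.141593+0.884)) = 3.568128637073 := by norm_num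
      rw [hx]
      exact expUB4 3.568128637073 2.440084969 35.450291 (by norm_num) (by norm_num) (by norm_num) (by norm_num)
    have hstep := step 0.867685 0.886361 0.884 0.771905102 0.634416036 32.877941 35.450291 hu1 hu2 hrlb hrub (by norm_num) hcon (by norm_num) (by norm_num) (by norm_num) htrig.1 htrig.2 (by norm_num) (by norm_num) he1 he2
    have hfin : c*Real.exp (r*u) ≤ 0.531*35.450291 := mul_le_mul hcU hstep (Real.exp_pos _).le (by norm_num)
    have h18 : (0.531:ℝ)*35.450291 ≤ 18.8495 := by norm_num
    linarith only [hfin, h18, Real.pi_gt_d6]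
  rcases le_or_gt 0.436 c with hin | hnext10
  · have hcU : c ≤ 0.49 := hnext9.le
    have hrub : r ≤ 0.909068 := by
      rw [hrdef]
      exact r_ub c lam ω 0.909068 0.436 hlamsq hωsq hlam0 hω0 (by norm_num) hin (by norm_num) (by norm_num)
    have hrlb : 0.88636 ≤ r := by
      rw [hrdef]
      exact r_lb c lam ω 0.88636 0.49 hlamsq hωsq hlam0 hω0 (by norm_num) hcU hc0 (by norm_num)
    have htrig := trigQ 0.218 0.216155662 0.216390927 0.976120368 0.976355632 0.421987888 0.422549001 0.905621945 0.906540641 0.764322983 0.643631868 (by norm_num) (by norm_num) (by norm_num) (by norm_num) (by norm_num) (by norm_num) (by norm_num) (by norm_num) (by norm_num) (by norm_num) (by norm_num) (by norm_num) (by norm_num) (by norm_num) (by norm_num) (by norm_num)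
    have hQT : (4:ℝ)*0.218 = 0.872 := by norm_num
    rw [hQT] at htrig
    have he1 : (35.069302:ℝ) ≤ Real.exp ((0.88636:ℝ)*(3.141592+0.872)) := by
      have hx : ((0.88636:ℝ)*(3.141592+0.872)) = 3.55748740512 := by norm_num
      rw [hx]
      exact expLB4 3.55748740512 2.433502419 35.069302 (by norm_num) (by norm_num) (by norm_num) (by norm_num)
    have he2 : Real.exp ((0.909068:ℝ)*(3.141593+0.872)) ≤ (38.422056:ℝ) := by
      have hx : ((0.909068:ℝ)*(3.141593+0.872)) = 3.648628961324 := by norm_num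
      rw [hx]
      exact expUB4 3.648628961324 2.489689281 38.422056 (by norm_num) (by norm_num) (by norm_num) (by norm_num)
    have hstep := step 0.88636 0.909068 0.872 0.764322983 0.643631868 35.069302 38.422056 hu1 hu2 hrlb hrub (by norm_num) hcon (by norm_num) (by norm_num) (by norm_num) htrig.1 htrig.2 (by norm_num) (by norm_num) he1 he2
    have hfin : c*Real.exp (r*u) ≤ 0.49*38.422056 := mul_le_mul hcU hstep (Real.exp_pos _).le (by norm_num)
    have h18 : (0.49:ℝ)*38.422056 ≤ 18.8495 := by norm_num
    linarith only [hfin, h18, Real.pi_gt_d6]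
  rcases le_or_gt 0.345 c with hin | hnext11
  · have hcU : c ≤ 0.436 := hnext10.le
    have hrub : r ≤ 0.942158 := by
      rw [hrdef]
      exact r_ub c lam ω 0.942158 0.345 hlamsq hωsq hlam0 hω0 (by norm_num) hin (by norm_num) (by norm_num)
    have hrlb : 0.909067 ≤ r := by
      rw [hrdef]
      exact r_lb c lam ω 0.909067 0.436 hlamsq hωsq hlam0 hω0 (by norm_num) hcU hc0 (by norm_num)
    have htrig := trigQ 0.214 0.212257376 0.212475843 0.976992766 0.977211234 0.414747841 0.415267562 0.909029729 0.909883592 0.754036235 0.655776302 (by norm_num) (by norm_num) (by norm_num) (by norm_num) (by norm_num) (by norm_num) (by norm_num) (by norm_num) (by norm_num) (by norm_num) (by norm_num) (by norm_num) (by norm_num) (by norm_num) (by norm_num) (by norm_num)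
    have hQT : (4:ℝ)*0.214 = 0.856 := by norm_num
    rw [hQT] at htrig
    have he1 : (37.85999:ℝ) ≤ Real.exp ((0.909067:ℝ)*(3.141592+0.856)) := by
      have hx : ((0.909067:ℝ)*(3.141592+0.856)) = 3.634078966664 := by norm_num
      rw [hx]
      exact expLB4 3.634078966664 2.480533655 37.85999 (by norm_num) (by norm_num) (by norm_num) (by norm_num)
    have he2 : Real.exp ((0.942158:ℝ)*(3.141593+0.856)) ≤ (43.222733:ℝ) := by
      have hx : ((0.942158:ℝ)*(3.141593+0.856)) = 3.766364225694 := by norm_num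
      rw [hx]
      exact expUB4 3.766364225694 2.564059243 43.222733 (by norm_num) (by norm_num) (by norm_num) (by norm_num)
    have hstep := step 0.909067 0.942158 0.856 0.754036235 0.655776302 37.85999 43.222733 hu1 hu2 hrlb hrub (by norm_num) hcon (by norm_num) (by norm_num) (by norm_num) htrig.1 htrig.2 (by norm_num) (by norm_num) he1 he2
    have hfin : c*Real.exp (r*u) ≤ 0.436*43.222733 := mul_le_mul hcU hstep (Real.exp_pos _).le (by norm_num)
    have h18 : (0.436:ℝ)*43.222733 ≤ 18.8495 := by norm_num
    linarith only [hfin, h18, Real.pi_gt_d6]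
  rcases le_or_gt 0.0316 c with hin | hnext12
  · have hcU : c ≤ 0.345 := hnext11.le
    have hrub : r ≤ 0.999501 := by
      rw [hrdef]
      exact r_ub c lam ω 0.999501 0.0316 hlamsq hωsq hlam0 hω0 (by norm_num) hin (by norm_num) (by norm_num)
    have hrlb : 0.942157 ≤ r := by
      rw [hrdef]
      exact r_lb c lam ω 0.942157 0.345 hlamsq hωsq hlam0 hω0 (by norm_num) hcU hc0 (by norm_num)
    have htrig := trigQ 0.209 0.207379068 0.207577822 0.978060123 0.978258877 0.405658393 0.406129695 0.913203208 0.913980861 0.740897091 0.670722029 (by norm_num) (by norm_num) (by norm_num) (by norm_num) (by norm_num) (by norm_num) (by norm_num) (by norm_num) (by norm_num) (by norm_num) (by norm_num) (by norm_num) (by norm_num) (by norm_num) (by norm_num) (by norm_num)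
    have hQT : (4:ℝ)*0.209 = 0.836 := by norm_num
    rw [hQT] at htrig
    have he1 : (42.406149:ℝ) ≤ Real.exp ((0.942157:ℝ)*(3.141592+0.836)) := by
      have hx : ((0.942157:ℝ)*(3.141592+0.836)) = 3.747516145944 := by norm_num
      rw [hx]
      exact expLB4 3.747516145944 2.551862148 42.406149 (by norm_num) (by norm_num) (by norm_num) (by norm_num)
    have he2 : Real.exp ((0.999501:ℝ)*(3.141593+0.836)) ≤ (53.282564:ℝ) := by
      have hx : ((0.999501:ℝ)*(3.141593+0.836)) = 3.975608181093 := by norm_num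
      rw [hx]
      exact expUB4 3.975608181093 2.701756953 53.282564 (by norm_num) (by norm_num) (by norm_num) (by norm_num)
    have hstep := step 0.942157 0.999501 0.836 0.740897091 0.670722029 42.406149 53.282564 hu1 hu2 hrlb hrub (by norm_num) hcon (by norm_num) (by norm_num) (by norm_num) htrig.1 htrig.2 (by norm_num) (by norm_num) he1 he2
    have hfin : c*Real.exp (r*u) ≤ 0.345*53.282564 := mul_le_mul hcU hstep (Real.exp_pos _).le (by norm_num)
    have h18 : (0.345:ℝ)*53.282564 ≤ 18.8495 := by norm_num
    linarith only [hfin, h18, Real.pi_gt_d6]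
  have hsm : c ≤ 0.0316 := hnext12.le
  have h2 : lam^2 < ω^2 := by
    rw [hlamsq, hωsq]
    linarith only [pow_pos hc0 2]
  have hlo : lam < ω := lt_of_pow_lt_pow_left₀ 2 hω0.le h2
  have hrlt1 : r < 1 := by
    rw [hrdef]
    exact (div_lt_one hω0).2 hlo
  have hupos : 0 < u := lt_trans hπ hu1
  have hru8 : r*u ≤ 6.283186 := by
    have hx := mul_pos (sub_pos.2 hrlt1) hupos
    linarith only [hx, Real.pi_lt_d6, hu2]
  have hexp : Real.exp (r*u) ≤ 535.494557 := by
    refine le_trans (Real.exp_le_exp.2 hru8) ?_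
    exact expUB8 6.283186 2.193281536 535.494557 (by norm_num) (by norm_num) (by norm_num) (by norm_num)
  have hfin : c*Real.exp (r*u) ≤ 0.0316*535.494557 := mul_le_mul hsm hexp (Real.exp_pos _).le (by norm_num)
  have h18 : (0.0316:ℝ)*535.494557 ≤ 18.8495 := by norm_num
  linarith only [hfin, h18, Real.pi_gt_d6]
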